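/- Let I ⊆ R be a monomial ideal with linear quotients whose decomposition function b is regular. For i ≥ 1 let F_i be the free R-module with basis the symbols (m;α) with m ∈ G(I), α ⊆ set(m), |α| = i−1, and let F_0 := R. Define R-linear maps d : F_i → F_{i−1} by d(m;∅) := m, and for α = {j_1 < … < j_p} with p ≥ 1: d(m;α) := Σ_{i=1}^p (−1)^i x_{j_i} (m; α∖{j_i}) − Σ_{i=1}^p (−1)^i (x_{j_i}·m / b(x_{j_i}·m)) (b(x_{j_i}·m); α∖{j_i}), where a symbol (u;β) is interpreted as 0 whenever β ⊄ set(u). Then d ∘ d = 0, i.e., this data is a chain complex of free R-modules. -/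

import Mathlib

open MvPolynomial

/-- The monomial ideal generated by a set of exponent vectors. -/
noncomputable def genIdeal (K : Type*) [Field K] {n : ℕ} (ms : Set (Fin n →₀ ℕ)) :
    Ideal (MvPolynomial (Fin n) K) :=
  Ideal.span ((fun u => MvPolynomial.monomial u (1 : K)) '' ms)

/-- The colon ideal `⟨m_1, …, m_{j-1}⟩ : m_j`. -/
noncomputable def colonJ (K : Type*) [Field K] {n k : ℕ} (m : Fin k → (Fin n →₀ ℕ))
    (j : Fin k) : Ideal (MvPolynomial (Fin n) K) :=
  Submodule.colon (genIdeal K {u | ∃ i : Fin k, i < j ∧ u = m i})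
    (Ideal.span {MvPolynomial.monomial (m j) (1 : K)})

/-- `I` has linear quotients w.r.t. the ordering `m_1,…,m_k` of its generators:
each colon ideal is generated by a subset of the variables. -/
def HasLinearQuotients (K : Type*) [Field K] {n k : ℕ}
    (m : Fin k → (Fin n →₀ ℕ)) : Prop :=
  ∀ j : Fin k, ∃ S : Set (Fin n),
    colonJ K m j = Ideal.span ((fun s => (MvPolynomial.X s : MvPolynomial (Fin n) K)) '' S)

/-- `set(m_j) = {i : x_i ∈ ⟨m_1,…,m_{j-1}⟩ : m_j}`. -/
def mset (K : Type*) [Field K] {n k : ℕ} (m : Fin k → (Fin n →₀ ℕ)) (j : Fin k) :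
    Set (Fin n) :=
  {t | (MvPolynomial.X t : MvPolynomial (Fin n) K) ∈ colonJ K m j}

/-- The `m i` are minimal monomial generators: none divides another. -/
def MinimalGens {n k : ℕ} (m : Fin k → (Fin n →₀ ℕ)) : Prop :=
  ∀ i j : Fin k, m i ≤ m j → i = j

/-- `b` is the decomposition function: for a monomial `u ∈ I`, `b u` is the smallest
index `j` with `u ∈ ⟨m_1,…,m_j⟩`. -/
def IsDecompositionFunction (K : Type*) [Field K] {n k : ℕ}
    (m : Fin k → (Fin n →₀ ℕ)) (b : (Fin n →₀ ℕ) → Fin k) : Prop :=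
  ∀ u : Fin n →₀ ℕ, MvPolynomial.monomial u (1 : K) ∈ genIdeal K (Set.range m) →
    (MvPolynomial.monomial u (1 : K) ∈ genIdeal K {v | ∃ i : Fin k, i ≤ b u ∧ v = m i}) ∧
    (∀ j : Fin k,
      MvPolynomial.monomial u (1 : K) ∈ genIdeal K {v | ∃ i : Fin k, i ≤ j ∧ v = m i} →
      b u ≤ j)

/-- The decomposition function is regular: `set(b(x_t·m)) ⊆ set(m)` for every
generator `m` and every `t ∈ set(m)`. -/
def IsRegularDecomp (K : Type*) [Field K] {n k : ℕ}
    (m : Fin k → (Fin n →₀ ℕ)) (b : (Fin n →₀ ℕ) → Fin k) : Prop :=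
  ∀ j : Fin k, ∀ t ∈ mset K m j,
    mset K m (b (m j + Finsupp.single t 1)) ⊆ mset K m j

open scoped Classical

set_option maxHeartbeats 1000000

section Aux
section Aux

variable {K : Type*} [Field K] {n k : ℕ} {m : Fin k → (Fin n →₀ ℕ)}
  {b : (Fin n →₀ ℕ) → Fin k}

theorem mem_genIdeal_iff {S : Set (Fin n →₀ ℕ)} {u : Fin n →₀ ℕ} :
    MvPolynomial.monomial u (1 : K) ∈ genIdeal K S ↔ ∃ v ∈ S, v ≤ u := by
  rw [genIdeal, MvPolynomial.mem_ideal_span_monomial_image]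
  constructor
  · intro h
    exact h u (by simp [MvPolynomial.support_monomial])
  · intro h xi hxi
    have hx : xi = u := by simpa [MvPolynomial.support_monomial] using hxi
    subst hx; exact h

theorem X_mul_monomial_gen (t : Fin n) (u : Fin n →₀ ℕ) :
    (X t : MvPolynomial (Fin n) K) * monomial u 1 = monomial (u + Finsupp.single t 1) 1 := by
  rw [X, monomial_mul, one_mul, add_comm]

theorem mset_iff {j : Fin k} {t : Fin n} :
    t ∈ mset K m j ↔ ∃ i, i < j ∧ m i ≤ m j + Finsupp.single t 1 := by
  constructor
  · intro h
    have h' : (MvPolynomial.X t : MvPolynomial (Fin n) K) ∈ colonJ K m j := h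
    rw [colonJ] at h'
    have h2 := Submodule.mem_colon.mp h' (MvPolynomial.monomial (m j) 1)
      (Ideal.subset_span (Set.mem_singleton _))
    rw [smul_eq_mul, X_mul_monomial_gen] at h2
    obtain ⟨v, ⟨i, hij, rfl⟩, hle⟩ := mem_genIdeal_iff.mp h2
    exact ⟨i, hij, hle⟩
  · rintro ⟨i, hij, hle⟩
    show (MvPolynomial.X t : MvPolynomial (Fin n) K) ∈ colonJ K m j
    rw [colonJ]
    refine Submodule.mem_colon.mpr fun p hp => ?_
    obtain ⟨a, rfl⟩ := Ideal.mem_span_singleton'.mp hp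
    rw [smul_eq_mul, mul_comm a, ← mul_assoc, X_mul_monomial_gen]
    exact Ideal.mul_mem_right _ _ (mem_genIdeal_iff.mpr ⟨m i, ⟨i, hij, rfl⟩, hle⟩)

theorem b_le (hb : IsDecompositionFunction K m b) {u : Fin n →₀ ℕ} {i : Fin k}
    (h : m i ≤ u) : b u ≤ i := by
  have hmem : MvPolynomial.monomial u (1:K) ∈ genIdeal K (Set.range m) :=
    mem_genIdeal_iff.mpr ⟨m i, ⟨i, rfl⟩, h⟩
  exact (hb u hmem).2 i (mem_genIdeal_iff.mpr ⟨m i, ⟨i, le_refl i, rfl⟩, h⟩)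

theorem b_dvd (hb : IsDecompositionFunction K m b) {u : Fin n →₀ ℕ}
    (h : ∃ i, m i ≤ u) : m (b u) ≤ u := by
  obtain ⟨i0, hi0⟩ := h
  have hmem : MvPolynomial.monomial u (1:K) ∈ genIdeal K (Set.range m) :=
    mem_genIdeal_iff.mpr ⟨m i0, ⟨i0, rfl⟩, hi0⟩
  obtain ⟨v, ⟨i, hib, rfl⟩, hle⟩ := mem_genIdeal_iff.mp (hb u hmem).1
  have h2 : i = b u := le_antisymm hib (b_le hb hle)
  exact h2 ▸ hle

/-- linear quotients: for `i < j` there is a variable `r ∈ set(m_j)` with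
`(m j) r < (m i) r`. -/
theorem exists_colon_var (hlq : HasLinearQuotients K m) {i j : Fin k} (hij : i < j) :
    ∃ r ∈ mset K m j, (m j) r < (m i) r := by
  obtain ⟨S, hS⟩ := hlq j
  have hmem : MvPolynomial.monomial (m i - m j) (1:K) ∈ colonJ K m j := by
    rw [colonJ]
    refine Submodule.mem_colon.mpr fun p hp => ?_
    obtain ⟨a, rfl⟩ := Ideal.mem_span_singleton'.mp hp
    rw [smul_eq_mul, mul_comm a, ← mul_assoc, monomial_mul, one_mul]
    refine Ideal.mul_mem_right _ _ (mem_genIdeal_iff.mpr ⟨m i, ⟨i, hij, rfl⟩, le_tsub_add⟩)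
  rw [hS, MvPolynomial.mem_ideal_span_X_image] at hmem
  obtain ⟨r, hrS, hr⟩ := hmem (m i - m j) (by simp [MvPolynomial.support_monomial])
  refine ⟨r, ?_, ?_⟩
  · show (X r : MvPolynomial (Fin n) K) ∈ colonJ K m j
    rw [hS]
    exact Ideal.subset_span ⟨r, hrS, rfl⟩
  · have := Finsupp.tsub_apply (m i) (m j) r
    rw [this] at hr
    omega

theorem bb_lt (hb : IsDecompositionFunction K m b) {j : Fin k} {t : Fin n}
    (ht : t ∈ mset K m j) : b (m j + Finsupp.single t 1) < j := by
  obtain ⟨i, hij, hle⟩ := mset_iff.mp ht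
  exact lt_of_le_of_lt (b_le hb hle) hij

theorem bb_dvd (hb : IsDecompositionFunction K m b) {j : Fin k} {t : Fin n}
    (ht : t ∈ mset K m j) : m (b (m j + Finsupp.single t 1)) ≤ m j + Finsupp.single t 1 := by
  obtain ⟨i, _, hle⟩ := mset_iff.mp ht
  exact b_dvd hb ⟨i, hle⟩

theorem bb_apply (hmin : MinimalGens m) (hb : IsDecompositionFunction K m b)
    {j : Fin k} {t : Fin n} (ht : t ∈ mset K m j) :
    (m (b (m j + Finsupp.single t 1))) t = (m j) t + 1 := by
  have hlt := bb_lt hb ht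
  have hd := bb_dvd hb ht
  have ht1 : (m (b (m j + Finsupp.single t 1))) t ≤ (m j) t + 1 := by
    have h2 := Finsupp.le_def.mp hd t
    rwa [Finsupp.add_apply, Finsupp.single_eq_same] at h2
  by_contra hne
  have hle2 : m (b (m j + Finsupp.single t 1)) ≤ m j := by
    rw [Finsupp.le_def]; intro x
    rcases eq_or_ne x t with rfl | hxt
    · omega
    · have h3 := Finsupp.le_def.mp hd x
      rwa [Finsupp.add_apply, Finsupp.single_eq_of_ne' (Ne.symm hxt), add_zero] at h3
  exact absurd (hmin _ _ hle2) (ne_of_lt hlt)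

/-- "U2": adding a variable not in `set(b u)` does not change `b`. -/
theorem b_stable (hb : IsDecompositionFunction K m b) (hlq : HasLinearQuotients K m)
    {u : Fin n →₀ ℕ} (hu : ∃ i, m i ≤ u) {t : Fin n} (ht : t ∉ mset K m (b u)) :
    b (u + Finsupp.single t 1) = b u := by
  have h1 : m (b u) ≤ u := b_dvd hb hu
  have hle : b (u + Finsupp.single t 1) ≤ b u := b_le hb (le_trans h1 le_self_add)
  rcases eq_or_lt_of_le hle with heq | hlt
  · exact heq
  · exfalso
    have hi : m (b (u + Finsupp.single t 1)) ≤ u + Finsupp.single t 1 :=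
      b_dvd hb ⟨b u, le_trans h1 le_self_add⟩
    obtain ⟨r, hrmem, hr⟩ := exists_colon_var hlq hlt
    have hrt : r ≠ t := fun h => ht (h ▸ hrmem)
    have hir : (m (b (u + Finsupp.single t 1))) r ≤ u r := by
      have h2 := Finsupp.le_def.mp hi r
      rwa [Finsupp.add_apply, Finsupp.single_eq_of_ne' (Ne.symm hrt), add_zero] at h2
    have h2 : m (b u) + Finsupp.single r 1 ≤ u := by
      rw [Finsupp.le_def]; intro x
      rcases eq_or_ne x r with rfl | hxr
      · rw [Finsupp.add_apply, Finsupp.single_eq_same]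
        omega
      · rw [Finsupp.add_apply, Finsupp.single_eq_of_ne' (Ne.symm hxr), add_zero]
        exact Finsupp.le_def.mp h1 x
    obtain ⟨w, hw, hwle⟩ := mset_iff.mp hrmem
    exact absurd (b_le hb (le_trans hwle h2)) (not_le_of_gt hw)

/-- "U1" (Herzog–Takayama Lemma 1.11): for a regular decomposition function,
`b(x_t u) = b(x_t b(u))` whenever `t ∈ set(b u)`. -/
theorem b_swap (hb : IsDecompositionFunction K m b) (hlq : HasLinearQuotients K m)
    (hreg : IsRegularDecomp K m b) :
    ∀ u : Fin n →₀ ℕ, (∃ i, m i ≤ u) → ∀ t, t ∈ mset K m (b u) →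
      b (u + Finsupp.single t 1) = b (m (b u) + Finsupp.single t 1) := by
  suffices H : ∀ d (u : Fin n →₀ ℕ), u.sum (fun _ x => x) = d → (∃ i, m i ≤ u) →
      ∀ t, t ∈ mset K m (b u) →
      b (u + Finsupp.single t 1) = b (m (b u) + Finsupp.single t 1) by
    intro u hu t ht; exact H _ u rfl hu t ht
  intro d
  induction d using Nat.strong_induction_on with
  | _ d ih =>
    intro u hdeg hu t ht
    by_cases hurfl : u = m (b u)
    · conv_lhs => rw [hurfl]
    · have h1 : m (b u) ≤ u := b_dvd hb hu
      have hex : ∃ r, (m (b u)) r < u r := by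
        by_contra hc; push_neg at hc
        exact hurfl (le_antisymm (Finsupp.le_def.mpr hc) h1)
      obtain ⟨r, hr⟩ := hex
      set u' := u - Finsupp.single r 1 with hu'def
      have hru : Finsupp.single r 1 ≤ u := Finsupp.single_le_iff.mpr (by omega)
      have h2 : u' + Finsupp.single r 1 = u := tsub_add_cancel_of_le hru
      have h1' : m (b u) ≤ u' := by
        rw [Finsupp.le_def]; intro x
        rw [hu'def, Finsupp.tsub_apply]
        rcases eq_or_ne x r with rfl | hxr
        · rw [Finsupp.single_eq_same]
          omega
        · have := Finsupp.le_def.mp h1 x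
          rw [Finsupp.single_eq_of_ne' (Ne.symm hxr)]
          omega
      have hu'I : ∃ i, m i ≤ u' := ⟨b u, h1'⟩
      have h3 : b u' = b u :=
        le_antisymm (b_le hb h1') (b_le hb (le_trans (b_dvd hb hu'I) tsub_le_self))
      have hdeg' : u'.sum (fun _ x => x) < d := by
        have hs : (u' + Finsupp.single r 1).sum (fun (_ : Fin n) (x : ℕ) => x)
            = u'.sum (fun _ x => x) + 1 := by
          rw [Finsupp.sum_add_index' (fun _ => rfl) (fun _ _ _ => rfl),
            Finsupp.sum_single_index rfl]
        rw [h2, hdeg] at hs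
        omega
      have ht' : t ∈ mset K m (b u') := h3 ▸ ht
      have hIH := ih _ hdeg' u' rfl hu'I t ht'
      rw [h3] at hIH
      have hrnot : r ∉ mset K m (b (u' + Finsupp.single t 1)) := by
        rw [hIH]
        intro hrmem
        have hrj : r ∈ mset K m (b u) := hreg (b u) t ht hrmem
        obtain ⟨w, hw, hwle⟩ := mset_iff.mp hrj
        have hwu : m w ≤ u := by
          refine le_trans hwle ?_
          rw [Finsupp.le_def]; intro x
          rcases eq_or_ne x r with rfl | hxr
          · rw [Finsupp.add_apply, Finsupp.single_eq_same]
            omega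
          · rw [Finsupp.add_apply, Finsupp.single_eq_of_ne' (Ne.symm hxr), add_zero]
            exact Finsupp.le_def.mp h1 x
        exact absurd (b_le hb hwu) (not_le_of_gt hw)
      have hfin := b_stable hb hlq (u := u' + Finsupp.single t 1)
        ⟨b u, le_trans h1' le_self_add⟩ hrnot
      calc b (u + Finsupp.single t 1)
          = b (u' + Finsupp.single t 1 + Finsupp.single r 1) := by rw [add_right_comm, h2]
        _ = b (u' + Finsupp.single t 1) := hfin
        _ = b (m (b u) + Finsupp.single t 1) := hIH

theorem b_N (hb : IsDecompositionFunction K m b) (hlq : HasLinearQuotients K m)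
    (hreg : IsRegularDecomp K m b) {g : Fin k} {t s : Fin n}
    (htg : t ∈ mset K m g) (hsg : s ∈ mset K m g)
    (hP : t ∈ mset K m (b (m g + Finsupp.single s 1)))
    (hQ : s ∈ mset K m (b (m g + Finsupp.single t 1))) :
    b (m (b (m g + Finsupp.single t 1)) + Finsupp.single s 1)
      = b (m (b (m g + Finsupp.single s 1)) + Finsupp.single t 1) := by
  obtain ⟨i1, _, hle1⟩ := mset_iff.mp htg
  obtain ⟨i2, _, hle2⟩ := mset_iff.mp hsg
  have e1 := b_swap hb hlq hreg (m g + Finsupp.single t 1) ⟨i1, hle1⟩ s hQ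
  have e2 := b_swap hb hlq hreg (m g + Finsupp.single s 1) ⟨i2, hle2⟩ t hP
  rw [← e1, ← e2, add_right_comm]

theorem b_Dg (hmin : MinimalGens m) (hb : IsDecompositionFunction K m b)
    (hlq : HasLinearQuotients K m) (hreg : IsRegularDecomp K m b)
    {g : Fin k} {t s : Fin n} (htg : t ∈ mset K m g) (hsg : s ∈ mset K m g) (hts : t ≠ s)
    (hP : t ∉ mset K m (b (m g + Finsupp.single s 1))) :
    s ∈ mset K m (b (m g + Finsupp.single t 1)) ∧
      b (m (b (m g + Finsupp.single t 1)) + Finsupp.single s 1)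
        = b (m g + Finsupp.single s 1) := by
  obtain ⟨i1, _, hle1⟩ := mset_iff.mp htg
  obtain ⟨i2, _, hle2⟩ := mset_iff.mp hsg
  have e1 : b (m g + Finsupp.single s 1 + Finsupp.single t 1) = b (m g + Finsupp.single s 1) :=
    b_stable hb hlq ⟨i2, hle2⟩ hP
  have hQ : s ∈ mset K m (b (m g + Finsupp.single t 1)) := by
    by_contra hQn
    have e2 : b (m g + Finsupp.single t 1 + Finsupp.single s 1) = b (m g + Finsupp.single t 1) :=
      b_stable hb hlq ⟨i1, hle1⟩ hQn
    have heq : b (m g + Finsupp.single t 1) = b (m g + Finsupp.single s 1) := by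
      rw [← e2, add_right_comm, e1]
    have h1 : (m (b (m g + Finsupp.single t 1))) t = (m g) t + 1 := bb_apply hmin hb htg
    have h2 := Finsupp.le_def.mp (bb_dvd hb hsg) t
    rw [← heq] at h2
    rw [Finsupp.add_apply, Finsupp.single_eq_of_ne' (Ne.symm hts), add_zero] at h2
    omega
  refine ⟨hQ, ?_⟩
  have e3 := b_swap hb hlq hreg (m g + Finsupp.single t 1) ⟨i1, hle1⟩ s hQ
  rw [← e3, add_right_comm]
  exact e1

theorem key_tsub {u p q : Fin n →₀ ℕ} (e' : Fin n →₀ ℕ) (hpu : p ≤ u) (hq : q ≤ p + e') :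
    (u - p) + (p + e' - q) = u + e' - q := by
  rw [← add_tsub_assoc_of_le hq, ← add_assoc, tsub_add_cancel_of_le hpu]
end Aux

/-- `ε(α;t) = #{s ∈ α : s < t}`; the (1-based) position of `t` in `α` is `ε(α;t)+1`. -/
def eps {n : ℕ} (α : Finset (Fin n)) (t : Fin n) : ℕ := (α.filter (· < t)).card

section AuxEps

theorem eps_erase_lt {α : Finset (Fin n)} {t s : Fin n} (ht : t ∈ α) (hts : t < s) :
    eps (α.erase t) s + 1 = eps α s := by
  have htf : t ∈ α.filter (· < s) := Finset.mem_filter.mpr ⟨ht, hts⟩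
  rw [eps, eps, Finset.filter_erase, Finset.card_erase_of_mem htf]
  have h0 : 0 < (α.filter (· < s)).card := Finset.card_pos.mpr ⟨t, htf⟩
  omega

theorem eps_erase_ge {α : Finset (Fin n)} {t s : Fin n} (h : ¬ t < s) :
    eps (α.erase t) s = eps α s := by
  have htf : t ∉ α.filter (· < s) := fun hc => h (Finset.mem_filter.mp hc).2
  rw [eps, eps, Finset.filter_erase, Finset.erase_eq_of_notMem htf]

theorem sgn_swap {R : Type*} [CommRing R] {α : Finset (Fin n)} {t s : Fin n}
    (ht : t ∈ α) (hs : s ∈ α) (hts : t ≠ s) :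
    ((-1:R)^(eps α t+1) * (-1:R)^(eps (α.erase t) s+1))
      = -((-1:R)^(eps α s+1) * (-1:R)^(eps (α.erase s) t+1)) := by
  set p := eps α t + 1 + (eps (α.erase t) s + 1) with hp
  set q := eps α s + 1 + (eps (α.erase s) t + 1) with hq
  rw [← pow_add, ← pow_add]
  have key : Odd (p + q) := by
    rw [Nat.odd_iff]
    rcases lt_or_gt_of_ne hts with h | h
    · have h1 := eps_erase_lt ht h
      have h2 := eps_erase_ge (α := α) (t := s) (s := t) (asymm h)
      omega
    · have h1 := eps_erase_lt hs h
      have h2 := eps_erase_ge (α := α) (t := t) (s := s) (asymm h)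
      omega
  have h2 : ((-1:R))^p * ((-1:R))^q = -1 := by
    rw [← pow_add]; exact Odd.neg_one_pow key
  have hq1 : ((-1:R))^q * ((-1:R))^q = 1 := by
    rw [← pow_add]; exact Even.neg_one_pow ⟨q, rfl⟩
  calc ((-1:R))^p = ((-1:R))^p * (((-1:R))^q * ((-1:R))^q) := by rw [hq1, mul_one]
    _ = (((-1:R))^p * ((-1:R))^q) * ((-1:R))^q := by ring
    _ = -((-1:R))^q := by rw [h2]; ring

theorem sum_pair_cancel {M : Type*} [AddCommGroup M] {γ : Type*} [DecidableEq γ]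
    (α : Finset γ) (F : γ → γ → M)
    (h : ∀ t ∈ α, ∀ s ∈ α, t ≠ s → F t s + F s t = 0) :
    ∑ t ∈ α, ∑ s ∈ α.erase t, F t s = 0 := by
  have h1 : ∀ t ∈ α, ∑ s ∈ α.erase t, F t s
      = ∑ s ∈ α, if t = s then 0 else F t s := by
    intro t ht
    rw [← Finset.sum_erase α (f := fun s => if t = s then (0:M) else F t s) (if_pos rfl)]
    refine Finset.sum_congr rfl fun s hs => ?_
    rw [if_neg (Ne.symm (Finset.ne_of_mem_erase hs))]
  rw [Finset.sum_congr rfl h1, ← Finset.sum_product']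
  refine Finset.sum_involution (fun p _ => (p.2, p.1)) ?_ ?_ ?_ ?_
  · intro p hp
    rcases eq_or_ne p.1 p.2 with he | hne
    · simp [he]
    · rw [Finset.mem_product] at hp
      rw [if_neg hne, if_neg (Ne.symm hne)]
      exact h p.1 hp.1 p.2 hp.2 hne
  · intro p hp hne hc
    have hpp : p.2 = p.1 := by
      have := congrArg Prod.fst hc
      simpa using this
    exact hne (by rw [if_pos hpp.symm])
  · intro p hp
    rw [Finset.mem_product] at hp ⊢
    exact ⟨hp.2, hp.1⟩
  · intro p hp
    rfl

end AuxEps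

/-- The basis symbols `(m;α)` with `α ⊆ set(m)` and `|α| = i` (these span `F_{i+1}`). -/
def SymT (K : Type*) [Field K] {n k : ℕ} (m : Fin k → (Fin n →₀ ℕ)) (i : ℕ) : Type _ :=
  {s : Fin k × Finset (Fin n) // ↑s.2 ⊆ mset K m s.1 ∧ s.2.card = i}

/-- The symbol `(j';β)` as an element of `F_{i+1} = SymT i →₀ R`, interpreted as `0`
whenever `β ⊄ set(j')` (or the cardinality is wrong). -/
noncomputable def symEl (K : Type*) [Field K] {n k : ℕ} (m : Fin k → (Fin n →₀ ℕ))
    (i : ℕ) (j' : Fin k) (β : Finset (Fin n)) :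
    SymT K m i →₀ MvPolynomial (Fin n) K :=
  if h : ↑β ⊆ mset K m j' ∧ β.card = i then Finsupp.single ⟨(j', β), h⟩ 1 else 0

/-- `d : F_1 → F_0 = R`, `d(m;∅) = m`. -/
noncomputable def dZero (K : Type*) [Field K] {n k : ℕ} (m : Fin k → (Fin n →₀ ℕ)) :
    (SymT K m 0 →₀ MvPolynomial (Fin n) K) →ₗ[MvPolynomial (Fin n) K]
      MvPolynomial (Fin n) K :=
  Finsupp.linearCombination (MvPolynomial (Fin n) K)
    (fun s : SymT K m 0 => MvPolynomial.monomial (m s.1.1) (1 : K))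

/-- `d : F_{i+2} → F_{i+1}` on the basis symbol `(m;α)` (with `|α| = i+1`):
`d(m;α) = Σ (−1)^i x_{j_i}(m;α∖j_i) − Σ (−1)^i (x_{j_i}m/b(x_{j_i}m))(b(x_{j_i}m);α∖j_i)`,
where the (1-based) position of `t = j_i` in `α` is `eps α t + 1`. -/
noncomputable def dBasisSucc (K : Type*) [Field K] {n k : ℕ}
    (m : Fin k → (Fin n →₀ ℕ)) (b : (Fin n →₀ ℕ) → Fin k) (i : ℕ)
    (s : SymT K m (i + 1)) : SymT K m i →₀ MvPolynomial (Fin n) K :=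
  (∑ t ∈ s.1.2,
      (((-1 : MvPolynomial (Fin n) K) ^ (eps s.1.2 t + 1)) * MvPolynomial.X t) •
        symEl K m i s.1.1 (s.1.2.erase t))
  - ∑ t ∈ s.1.2,
      (((-1 : MvPolynomial (Fin n) K) ^ (eps s.1.2 t + 1)) *
          MvPolynomial.monomial
            ((m s.1.1 + Finsupp.single t 1) - m (b (m s.1.1 + Finsupp.single t 1)))
            (1 : K)) •
        symEl K m i (b (m s.1.1 + Finsupp.single t 1)) (s.1.2.erase t)

/-- The differential `d : F_{i+2} → F_{i+1}` of the iterated mapping cone resolution. -/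
noncomputable def dSucc (K : Type*) [Field K] {n k : ℕ} (m : Fin k → (Fin n →₀ ℕ))
    (b : (Fin n →₀ ℕ) → Fin k) (i : ℕ) :
    (SymT K m (i + 1) →₀ MvPolynomial (Fin n) K) →ₗ[MvPolynomial (Fin n) K]
      (SymT K m i →₀ MvPolynomial (Fin n) K) :=
  Finsupp.linearCombination (MvPolynomial (Fin n) K) (dBasisSucc K m b i)

section Aux2

variable {K : Type*} [Field K] {n k : ℕ} {m : Fin k → (Fin n →₀ ℕ)}
  {b : (Fin n →₀ ℕ) → Fin k}

theorem symEl_eq_zero {i : ℕ} {j' : Fin k} {β : Finset (Fin n)}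
    (hn : ¬ (↑β ⊆ mset K m j')) : symEl K m i j' β = 0 :=
  dif_neg (by tauto)

/-- The explicit value of the differential on a (would-be) basis symbol. -/
noncomputable def Dexp (K : Type*) [Field K] {n k : ℕ} (m : Fin k → (Fin n →₀ ℕ))
    (b : (Fin n →₀ ℕ) → Fin k) (i : ℕ) (j' : Fin k) (β : Finset (Fin n)) :
    SymT K m i →₀ MvPolynomial (Fin n) K :=
  (∑ t ∈ β,
      (((-1 : MvPolynomial (Fin n) K) ^ (eps β t + 1)) * MvPolynomial.X t) •
        symEl K m i j' (β.erase t))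
  - ∑ t ∈ β,
      (((-1 : MvPolynomial (Fin n) K) ^ (eps β t + 1)) *
          MvPolynomial.monomial
            ((m j' + Finsupp.single t 1) - m (b (m j' + Finsupp.single t 1)))
            (1 : K)) •
        symEl K m i (b (m j' + Finsupp.single t 1)) (β.erase t)

theorem dBasisSucc_mk (i : ℕ) (j' : Fin k) (β : Finset (Fin n))
    (h : ↑β ⊆ mset K m j' ∧ β.card = i + 1) :
    dBasisSucc K m b i ⟨(j', β), h⟩ = Dexp K m b i j' β := rfl

theorem dSucc_symEl (i : ℕ) (j' : Fin k) (β : Finset (Fin n)) (hc : β.card = i + 1) :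
    dSucc K m b i (symEl K m (i + 1) j' β)
      = if ↑β ⊆ mset K m j' then Dexp K m b i j' β else 0 := by
  rw [symEl]
  by_cases H : ↑β ⊆ mset K m j'
  · rw [dif_pos ⟨H, hc⟩, if_pos H]
    exact (Finsupp.linearCombination_single (MvPolynomial (Fin n) K) (v := dBasisSucc K m b i)
      (1 : MvPolynomial (Fin n) K) (⟨(j', β), ⟨H, hc⟩⟩ : SymT K m (i+1))).trans (one_smul _ _)
  · rw [dif_neg (by tauto), if_neg H, map_zero]

end Aux2

section Aux3

variable {K : Type*} [Field K] {n k : ℕ} {m : Fin k → (Fin n →₀ ℕ)}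
  {b : (Fin n →₀ ℕ) → Fin k}

/-- The monomial `x_t·m_{j'} / b(x_t·m_{j'})`. -/
noncomputable def cmon (K : Type*) [Field K] {n k : ℕ} (m : Fin k → (Fin n →₀ ℕ))
    (b : (Fin n →₀ ℕ) → Fin k) (j' : Fin k) (t : Fin n) : MvPolynomial (Fin n) K :=
  monomial (m j' + Finsupp.single t 1 - m (b (m j' + Finsupp.single t 1))) 1

noncomputable def Hterm (K : Type*) [Field K] {n k : ℕ} (m : Fin k → (Fin n →₀ ℕ))
    (b : (Fin n →₀ ℕ) → Fin k) (i : ℕ) (g : Fin k) (α : Finset (Fin n)) (t s : Fin n) :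
    SymT K m i →₀ MvPolynomial (Fin n) K :=
  ((X t : MvPolynomial (Fin n) K) * X s) • symEl K m i g ((α.erase t).erase s)
  - ((X t : MvPolynomial (Fin n) K) * cmon K m b g s) • symEl K m i (b (m g + Finsupp.single s 1)) ((α.erase t).erase s)
  - (if ↑(α.erase t) ⊆ mset K m (b (m g + Finsupp.single t 1)) then
      (cmon K m b g t * (X s : MvPolynomial (Fin n) K)) •
          symEl K m i (b (m g + Finsupp.single t 1)) ((α.erase t).erase s)
      - (cmon K m b g t * cmon K m b (b (m g + Finsupp.single t 1)) s) •
          symEl K m i (b (m (b (m g + Finsupp.single t 1)) + Finsupp.single s 1))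
            ((α.erase t).erase s)
     else 0)

noncomputable def Fterm (K : Type*) [Field K] {n k : ℕ} (m : Fin k → (Fin n →₀ ℕ))
    (b : (Fin n →₀ ℕ) → Fin k) (i : ℕ) (g : Fin k) (α : Finset (Fin n)) (t s : Fin n) :
    SymT K m i →₀ MvPolynomial (Fin n) K :=
  (((-1 : MvPolynomial (Fin n) K) ^ (eps α t + 1)) * X t) •
    ((((-1 : MvPolynomial (Fin n) K) ^ (eps (α.erase t) s + 1)) * X s) •
        symEl K m i g ((α.erase t).erase s)
      - (((-1 : MvPolynomial (Fin n) K) ^ (eps (α.erase t) s + 1)) *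
          monomial ((m g + Finsupp.single s 1) - m (b (m g + Finsupp.single s 1))) 1) •
        symEl K m i (b (m g + Finsupp.single s 1)) ((α.erase t).erase s))
  - (((-1 : MvPolynomial (Fin n) K) ^ (eps α t + 1)) *
      monomial ((m g + Finsupp.single t 1) - m (b (m g + Finsupp.single t 1))) 1) •
    (if ↑(α.erase t) ⊆ mset K m (b (m g + Finsupp.single t 1)) then
      (((-1 : MvPolynomial (Fin n) K) ^ (eps (α.erase t) s + 1)) * X s) •
          symEl K m i (b (m g + Finsupp.single t 1)) ((α.erase t).erase s)
      - (((-1 : MvPolynomial (Fin n) K) ^ (eps (α.erase t) s + 1)) *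
          monomial ((m (b (m g + Finsupp.single t 1)) + Finsupp.single s 1)
            - m (b (m (b (m g + Finsupp.single t 1)) + Finsupp.single s 1))) 1) •
          symEl K m i (b (m (b (m g + Finsupp.single t 1)) + Finsupp.single s 1))
            ((α.erase t).erase s)
     else 0)

theorem Fterm_eq (i : ℕ) (g : Fin k) (α : Finset (Fin n)) (t s : Fin n) :
    Fterm K m b i g α t s
      = (((-1 : MvPolynomial (Fin n) K) ^ (eps α t + 1))
          * ((-1 : MvPolynomial (Fin n) K) ^ (eps (α.erase t) s + 1))) •
          Hterm K m b i g α t s := by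
  rw [Fterm, Hterm]
  simp only [cmon]
  by_cases hPt : ↑(α.erase t) ⊆ mset K m (b (m g + Finsupp.single t 1))
  · rw [if_pos hPt, if_pos hPt]
    match_scalars <;> ring
  · rw [if_neg hPt, if_neg hPt]
    match_scalars <;> ring

theorem ite_insert_smul' (i : ℕ) (j' w : Fin k) (γ : Finset (Fin n)) (s : Fin n)
    (hs : s ∈ γ) (hQ : s ∈ mset K m j') (hsub : mset K m w ⊆ mset K m j')
    (c : MvPolynomial (Fin n) K) :
    (if ↑γ ⊆ mset K m j' then c • symEl K m i w (γ.erase s) else 0)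
      = c • symEl K m i w (γ.erase s) := by
  by_cases hβ : ↑(γ.erase s) ⊆ mset K m w
  · refine if_pos fun x hx => ?_
    rcases eq_or_ne x s with rfl | hxs
    · exact hQ
    · exact hsub (hβ (Finset.mem_coe.mpr
        (Finset.mem_erase.mpr ⟨hxs, Finset.mem_coe.mp hx⟩)))
  · rw [symEl_eq_zero hβ, smul_zero, ite_self]

theorem ite_insert_smul (i : ℕ) (j' : Fin k) (γ : Finset (Fin n)) (s : Fin n)
    (hs : s ∈ γ) (hQ : s ∈ mset K m j') (c : MvPolynomial (Fin n) K) :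
    (if ↑γ ⊆ mset K m j' then c • symEl K m i j' (γ.erase s) else 0)
      = c • symEl K m i j' (γ.erase s) :=
  ite_insert_smul' i j' j' γ s hs hQ (subset_rfl) c

theorem ite_sub_zero {M : Type*} [SubtractionMonoid M] (P : Prop) [Decidable P] (x y : M) :
    (if P then x - y else 0) = (if P then x else 0) - (if P then y else 0) := by
  split <;> simp

end Aux3

section Aux4

variable {K : Type*} [Field K] {n k : ℕ} {m : Fin k → (Fin n →₀ ℕ)}
  {b : (Fin n →₀ ℕ) → Fin k}

theorem cmon_mul_nondeg (hb : IsDecompositionFunction K m b)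
    (hlq : HasLinearQuotients K m) (hreg : IsRegularDecomp K m b)
    {g : Fin k} {t s : Fin n} (htg : t ∈ mset K m g) (hsg : s ∈ mset K m g)
    (hP : t ∈ mset K m (b (m g + Finsupp.single s 1)))
    (hQ : s ∈ mset K m (b (m g + Finsupp.single t 1))) :
    cmon K m b g t * cmon K m b (b (m g + Finsupp.single t 1)) s
      = cmon K m b g s * cmon K m b (b (m g + Finsupp.single s 1)) t := by
  simp only [cmon]
  rw [monomial_mul, monomial_mul, one_mul]
  congr 1
  rw [key_tsub _ (bb_dvd hb htg) (bb_dvd hb hQ),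
    key_tsub _ (bb_dvd hb hsg) (bb_dvd hb hP),
    b_N hb hlq hreg htg hsg hP hQ, add_right_comm]

theorem cmon_mul_deg (hmin : MinimalGens m) (hb : IsDecompositionFunction K m b)
    (hlq : HasLinearQuotients K m) (hreg : IsRegularDecomp K m b)
    {g : Fin k} {t s : Fin n} (htg : t ∈ mset K m g) (hsg : s ∈ mset K m g) (hts : t ≠ s)
    (hP : t ∉ mset K m (b (m g + Finsupp.single s 1))) :
    cmon K m b g t * cmon K m b (b (m g + Finsupp.single t 1)) s
      = (X t : MvPolynomial (Fin n) K) * cmon K m b g s := by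
  obtain ⟨hQ, hDg⟩ := b_Dg hmin hb hlq hreg htg hsg hts hP
  simp only [cmon]
  rw [monomial_mul, one_mul, X_mul_monomial_gen]
  congr 1
  rw [key_tsub _ (bb_dvd hb htg) (bb_dvd hb hQ), hDg,
    tsub_add_eq_add_tsub (bb_dvd hb hsg), add_right_comm]

theorem Hterm_swap_deg (hmin : MinimalGens m) (hb : IsDecompositionFunction K m b)
    (hlq : HasLinearQuotients K m) (hreg : IsRegularDecomp K m b)
    {i : ℕ} {g : Fin k} {α : Finset (Fin n)} (hα : ↑α ⊆ mset K m g)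
    {t s : Fin n} (ht : t ∈ α) (hs : s ∈ α) (hts : t ≠ s)
    (hP : t ∉ mset K m (b (m g + Finsupp.single s 1))) :
    Hterm K m b i g α t s = Hterm K m b i g α s t := by
  have htg : t ∈ mset K m g := hα (Finset.mem_coe.mpr ht)
  have hsg : s ∈ mset K m g := hα (Finset.mem_coe.mpr hs)
  obtain ⟨hQ, hDg⟩ := b_Dg hmin hb hlq hreg htg hsg hts hP
  have hsub : mset K m (b (m g + Finsupp.single s 1))
      ⊆ mset K m (b (m g + Finsupp.single t 1)) := by
    rw [← hDg]
    exact hreg _ s hQ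
  have hset : s ∈ α.erase t := Finset.mem_erase.mpr ⟨Ne.symm hts, hs⟩
  have htes : t ∈ α.erase s := Finset.mem_erase.mpr ⟨hts, ht⟩
  rw [Hterm, Hterm]
  -- right-hand side ite is zero
  have hPs : ¬ (↑(α.erase s) ⊆ mset K m (b (m g + Finsupp.single s 1))) :=
    fun hc => hP (hc (Finset.mem_coe.mpr htes))
  rw [if_neg hPs, ite_sub_zero,
    ite_insert_smul i _ (α.erase t) s hset hQ,
    cmon_mul_deg hmin hb hlq hreg htg hsg hts hP, hDg,
    ite_insert_smul' i _ _ (α.erase t) s hset hQ hsub,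
    show (α.erase s).erase t = (α.erase t).erase s from Finset.erase_right_comm]
  module

theorem Hterm_swap (hmin : MinimalGens m) (hb : IsDecompositionFunction K m b)
    (hlq : HasLinearQuotients K m) (hreg : IsRegularDecomp K m b)
    {i : ℕ} {g : Fin k} {α : Finset (Fin n)} (hα : ↑α ⊆ mset K m g)
    {t s : Fin n} (ht : t ∈ α) (hs : s ∈ α) (hts : t ≠ s) :
    Hterm K m b i g α t s = Hterm K m b i g α s t := by
  have htg : t ∈ mset K m g := hα (Finset.mem_coe.mpr ht)
  have hsg : s ∈ mset K m g := hα (Finset.mem_coe.mpr hs)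
  by_cases hP : t ∈ mset K m (b (m g + Finsupp.single s 1))
  · by_cases hQ : s ∈ mset K m (b (m g + Finsupp.single t 1))
    · -- non-degenerate case
      have hset : s ∈ α.erase t := Finset.mem_erase.mpr ⟨Ne.symm hts, hs⟩
      have htes : t ∈ α.erase s := Finset.mem_erase.mpr ⟨hts, ht⟩
      have hN := b_N hb hlq hreg htg hsg hP hQ
      have hsub1 : mset K m (b (m (b (m g + Finsupp.single t 1)) + Finsupp.single s 1))
          ⊆ mset K m (b (m g + Finsupp.single t 1)) := hreg _ s hQ
      have hsub2 : mset K m (b (m (b (m g + Finsupp.single s 1)) + Finsupp.single t 1))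
          ⊆ mset K m (b (m g + Finsupp.single s 1)) := hreg _ t hP
      rw [Hterm, Hterm, ite_sub_zero, ite_sub_zero,
        ite_insert_smul i _ (α.erase t) s hset hQ,
        ite_insert_smul i _ (α.erase s) t htes hP,
        ite_insert_smul' i _ _ (α.erase t) s hset hQ hsub1,
        ite_insert_smul' i _ _ (α.erase s) t htes hP hsub2,
        cmon_mul_nondeg hb hlq hreg htg hsg hP hQ, hN,
        show (α.erase s).erase t = (α.erase t).erase s from Finset.erase_right_comm]
      module
    · exact (Hterm_swap_deg hmin hb hlq hreg hα hs ht (Ne.symm hts) hQ).symm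
  · exact Hterm_swap_deg hmin hb hlq hreg hα ht hs hts hP

theorem Fterm_cancel (hmin : MinimalGens m) (hb : IsDecompositionFunction K m b)
    (hlq : HasLinearQuotients K m) (hreg : IsRegularDecomp K m b)
    {i : ℕ} {g : Fin k} {α : Finset (Fin n)} (hα : ↑α ⊆ mset K m g)
    {t s : Fin n} (ht : t ∈ α) (hs : s ∈ α) (hts : t ≠ s) :
    Fterm K m b i g α t s + Fterm K m b i g α s t = 0 := by
  rw [Fterm_eq, Fterm_eq,
    ← Hterm_swap hmin hb hlq hreg hα ht hs hts,
    sgn_swap (R := MvPolynomial (Fin n) K) hs ht (Ne.symm hts), neg_smul,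
    add_neg_cancel]

end Aux4

/-- `d ∘ d = 0`, i.e. the data `(F_•, d)` (with `F_0 = R` and `F_i` free
on the symbols `(m;α)`, `α ⊆ set(m)`, `|α| = i−1`) is a chain complex of free
`R`-modules. -/
theorem stmt9 (K : Type*) [Field K] {n k : ℕ} (m : Fin k → (Fin n →₀ ℕ))
    (hmin : MinimalGens m) (hlq : HasLinearQuotients K m)
    (b : (Fin n →₀ ℕ) → Fin k) (hb : IsDecompositionFunction K m b)
    (hreg : IsRegularDecomp K m b) :
    (dZero K m) ∘ₗ (dSucc K m b 0) = 0 ∧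
    ∀ i : ℕ, (dSucc K m b i) ∘ₗ (dSucc K m b (i + 1)) = 0 := by
  constructor
  · -- d ∘ d = 0 in lowest degree
    apply Finsupp.lhom_ext'
    intro s₀
    apply LinearMap.ext_ring
    simp only [LinearMap.comp_apply, Finsupp.lsingle_apply, LinearMap.zero_apply]
    have hstep : (dSucc K m b 0) (Finsupp.single s₀ 1) = dBasisSucc K m b 0 s₀ := by
      rw [dSucc, Finsupp.linearCombination_single, one_smul]
    rw [hstep]
    obtain ⟨⟨g, α⟩, hprop⟩ := s₀
    obtain ⟨t, rfl⟩ := Finset.card_eq_one.mp hprop.2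
    have htg : t ∈ mset K m g := hprop.1 (by simp)
    rw [dBasisSucc_mk _ _ _ hprop, Dexp, Finset.sum_singleton, Finset.sum_singleton]
    have heps : eps {t} t = 0 := by
      rw [eps]
      simp [Finset.filter_singleton]
    have hesub : (↑(({t} : Finset (Fin n)).erase t) ⊆ mset K m g) := by
      simp [Finset.erase_singleton]
    rw [heps, Finset.erase_singleton, map_sub, LinearMap.map_smul, LinearMap.map_smul]
    have hE : ∀ j' : Fin k, dZero K m (symEl K m 0 j' ∅) = monomial (m j') (1:K) := by
      intro j'
      rw [symEl, dif_pos ⟨by simp, rfl⟩]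
      exact (Finsupp.linearCombination_single (MvPolynomial (Fin n) K)
        (v := fun s : SymT K m 0 => MvPolynomial.monomial (m s.1.1) (1 : K))
        (1 : MvPolynomial (Fin n) K) (⟨(j', ∅), ⟨by simp, rfl⟩⟩ : SymT K m 0)).trans (one_smul _ _)
    rw [hE, hE, smul_eq_mul, smul_eq_mul, pow_one, neg_one_mul, neg_one_mul, neg_mul,
      neg_mul, X_mul_monomial_gen, monomial_mul, one_mul,
      tsub_add_cancel_of_le (bb_dvd hb htg), sub_neg_eq_add, neg_add_cancel]
  · -- d ∘ d = 0 in higher degrees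
    intro i
    apply Finsupp.lhom_ext'
    intro s₀
    apply LinearMap.ext_ring
    simp only [LinearMap.comp_apply, Finsupp.lsingle_apply, LinearMap.zero_apply]
    have hstep : (dSucc K m b (i+1)) (Finsupp.single s₀ 1) = dBasisSucc K m b (i+1) s₀ := by
      rw [dSucc, Finsupp.linearCombination_single, one_smul]
    rw [hstep]
    obtain ⟨⟨g, α⟩, hprop⟩ := s₀
    rw [dBasisSucc_mk _ _ _ hprop, Dexp, map_sub, map_sum, map_sum]
    simp only [LinearMap.map_smul]
    have hcard' : ∀ t ∈ α, (α.erase t).card = i + 1 := by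
      intro t ht
      rw [Finset.card_erase_of_mem ht, hprop.2]
      omega
    have hsum : ∀ t ∈ α,
        (((-1 : MvPolynomial (Fin n) K) ^ (eps α t + 1)) * X t) •
            dSucc K m b i (symEl K m (i+1) g (α.erase t))
          - (((-1 : MvPolynomial (Fin n) K) ^ (eps α t + 1)) *
              monomial ((m g + Finsupp.single t 1) - m (b (m g + Finsupp.single t 1))) 1) •
            dSucc K m b i (symEl K m (i+1) (b (m g + Finsupp.single t 1)) (α.erase t))
          = ∑ s ∈ α.erase t, Fterm K m b i g α t s := by
      intro t ht
      rw [dSucc_symEl _ _ _ (hcard' t ht), dSucc_symEl _ _ _ (hcard' t ht)]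
      have hgsub : ↑(α.erase t) ⊆ mset K m g :=
        fun x hx => hprop.1 (Finset.mem_coe.mpr (Finset.mem_of_mem_erase (Finset.mem_coe.mp hx)))
      rw [if_pos hgsub]
      by_cases hPt : ↑(α.erase t) ⊆ mset K m (b (m g + Finsupp.single t 1))
      · rw [if_pos hPt, Dexp, Dexp, ← Finset.sum_sub_distrib, ← Finset.sum_sub_distrib,
          Finset.smul_sum, Finset.smul_sum, ← Finset.sum_sub_distrib]
        refine Finset.sum_congr rfl fun s hs => ?_
        rw [Fterm, if_pos hPt]
      · rw [if_neg hPt, smul_zero, sub_zero, Dexp, ← Finset.sum_sub_distrib, Finset.smul_sum]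
        refine Finset.sum_congr rfl fun s hs => ?_
        rw [Fterm, if_neg hPt, smul_zero, sub_zero]
    rw [← Finset.sum_sub_distrib, Finset.sum_congr rfl hsum]
    exact sum_pair_cancel α _ fun t ht s hs hts =>
      Fterm_cancel hmin hb hlq hreg hprop.1 ht hs hts
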